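/- Let A1 and A2 be complex matrices of proper dimensions m1×n and m2×n, and suppose they admit a joint unitary triangularization A1 = U1 T1 V*, A2 = U2 T2 V* in which the diagonal entries of T1 and T2 are positive reals. Then the GSV vector μ(A1,A2) multiplicatively majorizes the diagonal-ratios vector r defined by r_j = (T1)_{jj} / (T2)_{jj} for j = 1, …, n. -/

import Mathlib

open Matrix BigOperators Finset
open scoped ComplexOrder

namespace NetMod

/-- A square complex matrix is unitary. -/
def IsUnitary {k : ℕ} (U : Matrix (Fin k) (Fin k) ℂ) : Prop := Uᴴ * U = 1

/-- A generalized upper-triangular matrix: entry (i,j) vanishes whenever i > j. -/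
def GenUpperTri {m n : ℕ} (T : Matrix (Fin m) (Fin n) ℂ) : Prop :=
  ∀ (i : Fin m) (j : Fin n), (j : ℕ) < (i : ℕ) → T i j = 0

/-- The diagonal entries of a (tall) matrix are positive reals. -/
def PosRealDiag {m n : ℕ} (h : n ≤ m) (T : Matrix (Fin m) (Fin n) ℂ) : Prop :=
  ∀ j : Fin n, 0 < (T (Fin.castLE h j) j).re ∧ (T (Fin.castLE h j) j).im = 0

/-- Joint unitary triangularization of the pair (A1, A2). -/
def JointTriang {m1 m2 n : ℕ}
    (A1 : Matrix (Fin m1) (Fin n) ℂ) (A2 : Matrix (Fin m2) (Fin n) ℂ)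
    (U1 : Matrix (Fin m1) (Fin m1) ℂ) (U2 : Matrix (Fin m2) (Fin m2) ℂ)
    (V : Matrix (Fin n) (Fin n) ℂ)
    (T1 : Matrix (Fin m1) (Fin n) ℂ) (T2 : Matrix (Fin m2) (Fin n) ℂ) : Prop :=
  IsUnitary U1 ∧ IsUnitary U2 ∧ IsUnitary V ∧
  GenUpperTri T1 ∧ GenUpperTri T2 ∧
  A1 = U1 * T1 * Vᴴ ∧ A2 = U2 * T2 * Vᴴ

/-- `μ` is the generalized-singular-value vector of the pair (A1, A2): it is
nonincreasing, positive, and its squared entries are exactly the solutions, with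
algebraic multiplicity, of `det(A1ᴴA1 − x · A2ᴴA2) = 0` (expressed by the
polynomial identity `det(A1ᴴA1 − x A2ᴴA2) = det(A2ᴴA2) ∏ⱼ (μⱼ² − x)`). -/
def IsGSV {m1 m2 n : ℕ}
    (A1 : Matrix (Fin m1) (Fin n) ℂ) (A2 : Matrix (Fin m2) (Fin n) ℂ)
    (μ : Fin n → ℝ) : Prop :=
  Antitone μ ∧ (∀ j, 0 < μ j) ∧
  ∀ x : ℂ, (A1ᴴ * A1 - x • (A2ᴴ * A2)).det = (A2ᴴ * A2).det * ∏ j, ((μ j : ℂ) ^ 2 - x)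

/-- The vector `x` sorted in nonincreasing order. -/
noncomputable def sortDesc {n : ℕ} (x : Fin n → ℝ) : Fin n → ℝ :=
  fun i => x (Tuple.sort x i.rev)

/-- Product of the first `k` entries of `x`. -/
def PProd {n : ℕ} (x : Fin n → ℝ) (k : ℕ) : ℝ :=
  ∏ j ∈ Finset.univ.filter (fun j : Fin n => (j : ℕ) < k), x j

/-- Multiplicative majorization: equal total products, and every partial product of
the nonincreasingly sorted `x` dominates that of the sorted `y`. -/
def MulMaj {n : ℕ} (x y : Fin n → ℝ) : Prop :=
  (∏ j, x j = ∏ j, y j) ∧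
  ∀ k : ℕ, 1 ≤ k → k < n → PProd (sortDesc y) k ≤ PProd (sortDesc x) k

/-- Stacking `F` on top of the `n × n` identity matrix. -/
def augment {m n : ℕ} (F : Matrix (Fin m) (Fin n) ℂ) : Matrix (Fin (m + n)) (Fin n) ℂ :=
  Matrix.of fun i j => if h : (i : ℕ) < m then F ⟨i, h⟩ j
    else if (i : ℕ) = m + (j : ℕ) then 1 else 0

/-- The top `n × n` square part of a tall matrix. -/
def squarePart {m n : ℕ} (h : n ≤ m) (T : Matrix (Fin m) (Fin n) ℂ) :
    Matrix (Fin n) (Fin n) ℂ :=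
  T.submatrix (Fin.castLE h) id

/-- A 2-vector is mixed if one entry is at least 1 and the other at most 1. -/
def Mixed (μ : Fin 2 → ℝ) : Prop := (μ 0 ≤ 1 ∧ 1 ≤ μ 1) ∨ (μ 1 ≤ 1 ∧ 1 ≤ μ 0)

end NetMod

section Aux
open Matrix BigOperators Finset
open scoped ComplexOrder

section CB
variable {R : Type*} [CommRing R] {k n : ℕ}

theorem my_det_mul_expand (A : Matrix (Fin k) (Fin n) R) (B : Matrix (Fin n) (Fin k) R) :
    det (A * B) = ∑ p : Fin k → Fin n, (∏ i, A i (p i)) * det (B.submatrix p id) := by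
  have h : (A * B) = Matrix.of (fun i => ∑ j, A i j • B j) := by
    ext i j'
    simp [mul_apply]
  have e1 : det (A * B)
      = (Matrix.detRowAlternating (R := R) (n := Fin k)).toMultilinearMap
          (fun i => ∑ j, A i j • B j) := by rw [h]; rfl
  rw [e1, (Matrix.detRowAlternating (R := R) (n := Fin k)).toMultilinearMap.map_sum
      (g := fun i j => A i j • B j)]
  refine Finset.sum_congr rfl fun p _ => ?_
  rw [(Matrix.detRowAlternating (R := R) (n := Fin k)).toMultilinearMap.map_smul_univ
      (fun i => A i (p i)) (fun i => B (p i))]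
  rfl

end CB

section CB2
variable {R : Type*} [CommRing R] {k n : ℕ}

open Equiv Equiv.Perm in
theorem my_cauchy_binet (A : Matrix (Fin k) (Fin n) R) (B : Matrix (Fin n) (Fin k) R) :
    det (A * B) = ∑ g ∈ Finset.univ.filter (fun g : Fin k → Fin n => StrictMono g),
      det (A.submatrix id g) * det (B.submatrix g id) := by
  classical
  rw [my_det_mul_expand]
  rw [← Finset.sum_filter_add_sum_filter_not Finset.univ
      (fun p : Fin k → Fin n => Function.Injective p)]
  have hz : ∑ p ∈ Finset.univ.filter
      (fun p : Fin k → Fin n => ¬ Function.Injective p),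
      (∏ i, A i (p i)) * det (B.submatrix p id) = 0 := by
    refine Finset.sum_eq_zero fun p hp => ?_
    rw [Finset.mem_filter] at hp; simp only [Function.Injective] at hp
    push_neg at hp
    obtain ⟨i, j, hij, hne⟩ := hp.2
    have : det (B.submatrix p id) = 0 :=
      Matrix.det_zero_of_row_eq hne (by
        funext q; simp [Matrix.submatrix_apply, hij])
    rw [this, mul_zero]
  rw [hz, add_zero]
  rw [Finset.sum_nbij' (i := fun p => ((p ∘ Tuple.sort p : Fin k → Fin n), (Tuple.sort p)⁻¹))
      (j := fun gσ => gσ.1 ∘ gσ.2)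
      (t := (Finset.univ.filter (fun g : Fin k → Fin n => StrictMono g)) ×ˢ
        (Finset.univ : Finset (Equiv.Perm (Fin k))))
      (g := fun gσ => (∏ i, A i (gσ.1 (gσ.2 i))) *
        ((Equiv.Perm.sign gσ.2 : ℤ) * det (B.submatrix gσ.1 id)))]
  · rw [Finset.sum_product]
    refine Finset.sum_congr rfl fun g hg => ?_
    have hdetA : det (A.submatrix id g)
        = ∑ σ : Equiv.Perm (Fin k), ((Equiv.Perm.sign σ : ℤ) : R) * ∏ i, A i (g (σ i)) := by
      rw [← Matrix.det_transpose, Matrix.det_apply]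
      refine Finset.sum_congr rfl fun σ _ => ?_
      simp [Units.smul_def, zsmul_eq_mul]
    rw [hdetA, Finset.sum_mul]
    refine Finset.sum_congr rfl fun σ _ => by ring
  · intro p hp
    simp only [Finset.mem_filter, Finset.mem_univ, true_and] at hp
    simp only [Finset.mem_product, Finset.mem_filter, Finset.mem_univ, true_and, and_true]
    exact (Tuple.monotone_sort p).strictMono_of_injective
      (hp.comp (Equiv.injective _))
  · intro gσ hgσ
    simp only [Finset.mem_product, Finset.mem_filter, Finset.mem_univ, true_and, and_true] at hgσ
    simp only [Finset.mem_filter, Finset.mem_univ, true_and]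
    exact hgσ.injective.comp (Equiv.injective _)
  · intro p hp
    funext i
    simp
  · intro gσ hgσ
    simp only [Finset.mem_product, Finset.mem_filter, Finset.mem_univ, true_and, and_true] at hgσ
    obtain ⟨g, σ⟩ := gσ
    simp only at hgσ ⊢
    have hinj : Function.Injective (g ∘ σ) := hgσ.injective.comp (Equiv.injective _)
    have hsm : StrictMono ((g ∘ σ) ∘ Tuple.sort (g ∘ σ)) :=
      (Tuple.monotone_sort _).strictMono_of_injective (hinj.comp (Equiv.injective _))
    have hrange : Set.range ((g ∘ σ) ∘ Tuple.sort (g ∘ σ)) = Set.range g := by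
      rw [(Equiv.surjective _).range_comp, (Equiv.surjective _).range_comp]
    haveI : WellFoundedLT (Fin k) := inferInstance
    have hgeq : (g ∘ σ) ∘ Tuple.sort (g ∘ σ) = g :=
      (StrictMono.range_inj (β := Fin k) hsm hgσ).mp hrange
    have hσeq : ∀ i, σ (Tuple.sort (g ∘ σ) i) = i := by
      intro i
      exact hgσ.injective (congrFun hgeq i)
    have hs : Tuple.sort ((g ∘ σ) : Fin k → Fin n) = σ⁻¹ := by
      ext i
      exact (Equiv.eq_symm_apply σ).mpr (hσeq i) |>.symm ▸ rfl
    exact Prod.ext hgeq (by rw [hs, inv_inv])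
  · intro p hp
    simp only [Finset.mem_filter, Finset.mem_univ, true_and] at hp
    have h1 : (∏ i, A i ((p ∘ Tuple.sort p) (((Tuple.sort p)⁻¹ : Equiv.Perm (Fin k)) i)))
        = ∏ i, A i (p i) := by
      refine Finset.prod_congr rfl fun i _ => ?_
      simp
    have h2 : B.submatrix (p ∘ Tuple.sort p) id
        = (B.submatrix p id).submatrix (Tuple.sort p : Equiv.Perm (Fin k)) id := by
      ext i j; simp
    have h3 : det (B.submatrix (p ∘ Tuple.sort p) id)
        = (Equiv.Perm.sign (Tuple.sort p) : ℤ) * det (B.submatrix p id) := by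
      rw [h2]
      exact Matrix.det_permute _ _
    simp only [h1, h3]
    rw [← mul_assoc ((Equiv.Perm.sign (Tuple.sort p)⁻¹ : ℤ) : R)]
    norm_num
    rcases Int.units_eq_one_or (Equiv.Perm.sign (Tuple.sort p)) with h | h <;> simp [h]

end CB2

theorem my_fin_le_strictMono {k n : ℕ} {g : Fin k → Fin n} (hg : StrictMono g) :
    ∀ i : Fin k, (i : ℕ) ≤ (g i : ℕ) := by
  have H : ∀ (m : ℕ) (i : Fin k), (i : ℕ) = m → m ≤ (g i : ℕ) := by
    intro m
    induction m with
    | zero => intro i _; exact Nat.zero_le _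
    | succ m ih =>
      intro i hi
      have hm : m < k := by omega
      have hlt : (⟨m, hm⟩ : Fin k) < i := by
        have : (⟨m, hm⟩ : Fin k).val = m := rfl
        rw [Fin.lt_def]; omega
      have := ih ⟨m, hm⟩ rfl
      have h2 := hg hlt
      rw [Fin.lt_def] at h2
      omega
  exact fun i => H (i : ℕ) i rfl

theorem my_antitone_prod_le {n : ℕ} {w : Fin n → ℝ} (hw : Antitone w)
    (h0 : ∀ j, 0 ≤ w j) (S : Finset (Fin n)) :
    ∏ j ∈ S, w j ≤ ∏ j ∈ Finset.univ.filter (fun j : Fin n => (j : ℕ) < S.card), w j := by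
  classical
  set k := S.card with hk
  have hkn : k ≤ n := by
    simpa using Finset.card_le_univ S
  have h1 : ∏ j ∈ S, w j = ∏ i : Fin k, w (S.orderEmbOfFin rfl i) := by
    refine (Finset.prod_nbij (fun i => S.orderEmbOfFin rfl i) ?_ ?_ ?_ ?_).symm
    · intro i _; exact Finset.orderEmbOfFin_mem _ _ _
    · intro a _ b _ h; exact (S.orderEmbOfFin rfl).injective h
    · intro j hj
      have := Finset.range_orderEmbOfFin S (rfl : S.card = k)
      have : (j : Fin n) ∈ Set.range (S.orderEmbOfFin rfl) := by rw [this]; exact hj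
      obtain ⟨i, hi⟩ := this
      exact ⟨i, by simp, hi⟩
    · intro i _; rfl
  have h2 : ∏ j ∈ Finset.univ.filter (fun j : Fin n => (j : ℕ) < k), w j
      = ∏ i : Fin k, w ⟨(i : ℕ), lt_of_lt_of_le i.isLt hkn⟩ := by
    refine (Finset.prod_nbij (fun (i : Fin k) => (⟨(i : ℕ), lt_of_lt_of_le i.isLt hkn⟩ : Fin n)) ?_ ?_ ?_ ?_).symm
    · intro i _; simp
    · intro a _ b _ h
      have h2 := congrArg Fin.val h
      exact Fin.ext h2
    · intro j hj
      simp only [Finset.coe_filter, Set.mem_setOf_eq] at hj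
      exact ⟨⟨(j : ℕ), hj.2⟩, by simp, Fin.ext rfl⟩
    · intro i _; rfl
  rw [h1, h2]
  refine Finset.prod_le_prod (fun i _ => h0 _) (fun i _ => ?_)
  refine hw ?_
  rw [Fin.le_def]
  exact my_fin_le_strictMono (S.orderEmbOfFin rfl).strictMono i

theorem my_gram_cb {n k : ℕ} (A : Matrix (Fin n) (Fin k) ℂ) :
    det (Aᴴ * A) = ∑ g ∈ Finset.univ.filter (fun g : Fin k → Fin n => StrictMono g),
      (Complex.normSq (det (A.submatrix g id)) : ℂ) := by
  classical
  rw [my_cauchy_binet]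
  refine Finset.sum_congr rfl fun g _ => ?_
  have h : (Aᴴ).submatrix id g = (A.submatrix g id)ᴴ := by
    ext i j; simp [Matrix.conjTranspose_apply]
  rw [h, Matrix.det_conjTranspose]
  rw [Complex.normSq_eq_conj_mul_self]
  rfl

theorem my_ofFn_multiset {n : ℕ} {α : Type*} (f : Fin n → α) :
    (↑(List.ofFn f) : Multiset α) = Multiset.map f Finset.univ.val := by
  rw [List.ofFn_eq_map, Fin.univ_def]
  rfl

theorem my_perm_multiset {n : ℕ} {α : Type*} (f : Fin n → α) (σ : Equiv.Perm (Fin n)) :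
    Multiset.map (f ∘ σ) Finset.univ.val = Multiset.map f Finset.univ.val := by
  rw [← Multiset.map_map, Multiset.map_univ_val_equiv]

theorem my_exists_perm {n : ℕ} {e m : Fin n → ℝ}
    (hmul : Multiset.map e Finset.univ.val = Multiset.map m Finset.univ.val) :
    ∃ σ : Equiv.Perm (Fin n), ∀ i, e i = m (σ i) := by
  have hsorted1 : (List.ofFn (e ∘ Tuple.sort e)).SortedLE :=
    List.sortedLE_ofFn_iff.mpr (Tuple.monotone_sort e)
  have hsorted2 : (List.ofFn (m ∘ Tuple.sort m)).SortedLE :=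
    List.sortedLE_ofFn_iff.mpr (Tuple.monotone_sort m)
  have hperm : List.Perm (List.ofFn (e ∘ Tuple.sort e)) (List.ofFn (m ∘ Tuple.sort m)) := by
    rw [← Multiset.coe_eq_coe, my_ofFn_multiset, my_ofFn_multiset,
      my_perm_multiset, my_perm_multiset, hmul]
  have heq : e ∘ Tuple.sort e = m ∘ Tuple.sort m :=
    List.ofFn_injective (List.Perm.eq_of_sortedLE hsorted1 hsorted2 hperm)
  refine ⟨((Tuple.sort e)⁻¹).trans (Tuple.sort m), fun i => ?_⟩
  have := congrFun heq ((Tuple.sort e)⁻¹ i)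
  simpa using this

theorem my_multiset_of_poly {n : ℕ} (e m : Fin n → ℝ)
    (h : ∀ x : ℂ, ∏ i, ((e i : ℂ) - x) = ∏ j, ((m j : ℂ) - x)) :
    Multiset.map e Finset.univ.val = Multiset.map m Finset.univ.val := by
  have key : Multiset.map (fun i => (e i : ℂ)) Finset.univ.val
      = Multiset.map (fun j => (m j : ℂ)) Finset.univ.val := by
    have hpoly : (Multiset.map (fun a => Polynomial.X - Polynomial.C a)
          (Multiset.map (fun i => (e i : ℂ)) Finset.univ.val)).prod
        = (Multiset.map (fun a => Polynomial.X - Polynomial.C a)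
          (Multiset.map (fun j => (m j : ℂ)) Finset.univ.val)).prod := by
      apply Polynomial.funext
      intro x
      rw [Polynomial.eval_multiset_prod, Polynomial.eval_multiset_prod]
      simp only [Multiset.map_map, Function.comp_def, Polynomial.eval_sub,
        Polynomial.eval_X, Polynomial.eval_C]
      have he : (Multiset.map (fun i => x - (e i : ℂ)) Finset.univ.val).prod
          = ∏ i, (x - (e i : ℂ)) := rfl
      have hm : (Multiset.map (fun j => x - (m j : ℂ)) Finset.univ.val).prod
          = ∏ j, (x - (m j : ℂ)) := rfl
      rw [he, hm]
      have h1 : ∀ f : Fin n → ℂ, ∏ i, (x - f i) = (-1) ^ n * ∏ i, (f i - x) := by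
        intro f
        have hf : ∀ i : Fin n, x - f i = (-1) * (f i - x) := fun i => by ring
        simp_rw [hf]
        rw [Finset.prod_mul_distrib, Finset.prod_const, Finset.card_univ, Fintype.card_fin]
      rw [h1, h1, h x]
    have := congrArg Polynomial.roots hpoly
    rwa [Polynomial.roots_multiset_prod_X_sub_C, Polynomial.roots_multiset_prod_X_sub_C] at this
  have := congrArg (Multiset.map Complex.re) key
  rwa [Multiset.map_map, Multiset.map_map, Function.comp_def, Function.comp_def] at this

theorem my_prod_orderEmb {n k : ℕ} (S : Finset (Fin n)) (h : S.card = k) (w : Fin n → ℝ) :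
    ∏ p : Fin k, w (S.orderEmbOfFin h p) = ∏ j ∈ S, w j := by
  refine Finset.prod_nbij (fun i => S.orderEmbOfFin h i) ?_ ?_ ?_ ?_
  · intro i _; exact Finset.orderEmbOfFin_mem _ _ _
  · intro a _ b _ hab; exact (S.orderEmbOfFin h).injective hab
  · intro j hj
    have hr := Finset.range_orderEmbOfFin S h
    have : (j : Fin n) ∈ Set.range (S.orderEmbOfFin h) := by rw [hr]; exact hj
    obtain ⟨i, hi⟩ := this
    exact ⟨i, by simp, hi⟩
  · intro i _; rfl

theorem my_submatrix_mul {a b c a' c' : ℕ} (M : Matrix (Fin a) (Fin b) ℂ)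
    (N : Matrix (Fin b) (Fin c) ℂ) (r : Fin a' → Fin a) (q : Fin c' → Fin c) :
    (M * N).submatrix r q = M.submatrix r id * N.submatrix id q := by
  ext i j; simp [Matrix.mul_apply]

theorem my_key {n : ℕ} (G : Matrix (Fin n) (Fin n) ℂ) (μ : Fin n → ℝ)
    (hmono : Antitone μ) (hpos : ∀ j, 0 < μ j)
    (hchar : ∀ x : ℂ, det (Gᴴ * G - x • (1 : Matrix (Fin n) (Fin n) ℂ))
      = ∏ j, ((μ j : ℂ) ^ 2 - x))
    (hGtri : ∀ p q : Fin n, (q : ℕ) < (p : ℕ) → G p q = 0)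
    (S : Finset (Fin n)) :
    ∏ j ∈ S, Complex.normSq (G j j)
      ≤ ∏ j ∈ Finset.univ.filter (fun j : Fin n => (j : ℕ) < S.card), (μ j) ^ 2 := by
  classical
  set k := S.card with hkdef
  set N := Gᴴ * G with hNdef
  have hN : N.IsHermitian := Matrix.isHermitian_conjTranspose_mul_self G
  have hNpsd : N.PosSemidef := Matrix.posSemidef_conjTranspose_mul_self G
  set e := hN.eigenvalues with hedef
  have henn : ∀ i, 0 ≤ e i := fun i => hNpsd.eigenvalues_nonneg i
  set W := (hN.eigenvectorUnitary : Matrix (Fin n) (Fin n) ℂ) with hWdef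
  set D := Matrix.diagonal (fun i => (e i : ℂ)) with hDdef
  have hspec : N = W * D * Wᴴ := by
    have h := hN.spectral_theorem
    rw [Unitary.conjStarAlgAut_apply, Matrix.star_eq_conjTranspose] at h
    have hD' : Matrix.diagonal (RCLike.ofReal ∘ hN.eigenvalues) = D := by
      rw [hDdef]
      congr 1
    rw [← hD']
    exact h
  have hWW : W * Wᴴ = 1 := by
    have := hN.eigenvectorUnitary.2
    rw [Matrix.mem_unitaryGroup_iff] at this
    rwa [← Matrix.star_eq_conjTranspose]
  have hWW' : Wᴴ * W = 1 := by
    have := hN.eigenvectorUnitary.2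
    rw [Matrix.mem_unitaryGroup_iff'] at this
    rwa [← Matrix.star_eq_conjTranspose]
  -- characteristic polynomial of N in terms of eigenvalues
  have hpoly : ∀ x : ℂ, ∏ i, ((e i : ℂ) - x) = ∏ j, (((μ j ^ 2 : ℝ) : ℂ) - x) := by
    intro x
    have hDx : D - x • (1 : Matrix (Fin n) (Fin n) ℂ)
        = Matrix.diagonal (fun i => (e i : ℂ) - x) := by
      ext i j
      by_cases hij : i = j
      · subst hij; simp [hDdef, Matrix.diagonal_apply, Matrix.one_apply]
      · simp [hDdef, Matrix.diagonal_apply, Matrix.one_apply, hij]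
    have h1 : N - x • (1 : Matrix (Fin n) (Fin n) ℂ)
        = W * (D - x • (1 : Matrix (Fin n) (Fin n) ℂ)) * Wᴴ := by
      rw [Matrix.mul_sub, Matrix.sub_mul, ← hspec]
      congr 1
      rw [Matrix.mul_smul, Matrix.mul_one, Matrix.smul_mul, hWW]
    have h2 : det (N - x • (1 : Matrix (Fin n) (Fin n) ℂ))
        = ∏ i, ((e i : ℂ) - x) := by
      rw [h1, Matrix.det_mul_right_comm, hWW, Matrix.one_mul, hDx, Matrix.det_diagonal]
    have h3 := hchar x
    rw [← h2, h3]
    refine Finset.prod_congr rfl fun j _ => by push_cast; ring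
  obtain ⟨σ, hσ⟩ := my_exists_perm (my_multiset_of_poly e (fun j => μ j ^ 2) hpoly)
  have hkn : k ≤ n := by simpa using Finset.card_le_univ S
  set f := S.orderEmbOfFin hkdef.symm with hfdef
  set Y := Wᴴ.submatrix id ⇑f with hYdef
  set C := G.submatrix id ⇑f with hCdef
  set sd := fun i => (Real.sqrt (e i) : ℂ) with hsddef
  set Z := Matrix.diagonal sd * Y with hZdef
  have hYH : Yᴴ = W.submatrix ⇑f id := by
    ext p i
    simp [hYdef, Matrix.conjTranspose_apply]
  have hCC : Cᴴ * C = N.submatrix ⇑f ⇑f := by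
    ext p q
    simp [hCdef, hNdef, Matrix.mul_apply, Matrix.conjTranspose_apply]
  have hNsub : N.submatrix ⇑f ⇑f = Yᴴ * (D * Y) := by
    rw [hspec, my_submatrix_mul (W * D) Wᴴ ⇑f ⇑f, my_submatrix_mul W D ⇑f id,
      Matrix.submatrix_id_id, hYH, ← hYdef, Matrix.mul_assoc]
  have hZZ : Zᴴ * Z = N.submatrix ⇑f ⇑f := by
    have hdH : (Matrix.diagonal sd)ᴴ = Matrix.diagonal sd := by
      rw [Matrix.diagonal_conjTranspose]
      have : (star sd) = sd := by
        funext i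
        simp [hsddef, Complex.conj_ofReal]
      rw [this]
    have hdd : Matrix.diagonal sd * Matrix.diagonal sd = D := by
      rw [Matrix.diagonal_mul_diagonal]
      have : (fun i => sd i * sd i) = fun i => ((e i : ℝ) : ℂ) := by
        funext i
        simp only [hsddef, ← Complex.ofReal_mul, Real.mul_self_sqrt (henn i)]
      rw [this, hDdef]
    rw [hZdef, Matrix.conjTranspose_mul, hdH, Matrix.mul_assoc,
      ← Matrix.mul_assoc (Matrix.diagonal sd), hdd, hNsub]
  -- sums of squared subdeterminants
  have hsC := my_gram_cb C
  have hsZ := my_gram_cb Z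
  have hsY := my_gram_cb Y
  rw [hCC] at hsC
  rw [hZZ] at hsZ
  set SM := Finset.univ.filter (fun g : Fin k → Fin n => StrictMono g) with hSMdef
  have hsum_eq : ∑ g ∈ SM, Complex.normSq (det (C.submatrix g id))
      = ∑ g ∈ SM, Complex.normSq (det (Z.submatrix g id)) := by
    have h3 : ((∑ g ∈ SM, Complex.normSq (det (C.submatrix g id)) : ℝ) : ℂ)
        = ((∑ g ∈ SM, Complex.normSq (det (Z.submatrix g id)) : ℝ) : ℂ) := by
      push_cast
      rw [← hsC, ← hsZ]
    exact_mod_cast h3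
  -- lower bound
  have hflt : ⇑f ∈ SM := by
    simp only [hSMdef, Finset.mem_filter, Finset.mem_univ, true_and]
    exact f.strictMono
  have hCfdet : det (C.submatrix ⇑f id) = ∏ p : Fin k, G (f p) (f p) := by
    have htri : (C.submatrix ⇑f id).BlockTriangular id := by
      intro p q hpq
      have : f q < f p := f.strictMono hpq
      exact hGtri (f p) (f q) this
    rw [Matrix.det_of_upperTriangular htri]
    rfl
  have hlow : ∏ j ∈ S, Complex.normSq (G j j)
      ≤ ∑ g ∈ SM, Complex.normSq (det (C.submatrix g id)) := by
    have hterm : Complex.normSq (det (C.submatrix ⇑f id)) = ∏ j ∈ S, Complex.normSq (G j j) := by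
      rw [hCfdet, map_prod Complex.normSq]
      exact my_prod_orderEmb S hkdef.symm (fun j => Complex.normSq (G j j))
    rw [← hterm]
    exact Finset.single_le_sum (f := fun g : Fin k → Fin n => Complex.normSq (det (C.submatrix g id))) (fun g _ => Complex.normSq_nonneg _) hflt
  -- upper bound
  set bound := ∏ j ∈ Finset.univ.filter (fun j : Fin n => (j : ℕ) < k), (μ j) ^ 2 with hbdef
  have hbnn : 0 ≤ bound := Finset.prod_nonneg fun j _ => sq_nonneg _
  have hZsub : ∀ g : Fin k → Fin n,
      Z.submatrix g id = Matrix.diagonal (fun p => sd (g p)) * Y.submatrix g id := by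
    intro g
    ext p q
    simp [hZdef, Matrix.mul_apply, Matrix.diagonal_apply, Finset.sum_ite_eq]
  have hw : Antitone (fun j => (μ j) ^ 2) := by
    intro i j hij
    exact pow_le_pow_left₀ (le_of_lt (hpos j)) (hmono hij) 2
  have hwnn : ∀ j, 0 ≤ (μ j) ^ 2 := fun j => sq_nonneg _
  have hterm_bound : ∀ g ∈ SM, Complex.normSq (det (Z.submatrix g id))
      ≤ bound * Complex.normSq (det (Y.submatrix g id)) := by
    intro g hg
    have hgsm : StrictMono g := by
      simpa only [hSMdef, Finset.mem_filter, Finset.mem_univ, true_and] using hg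
    have hdet : det (Z.submatrix g id)
        = (∏ p : Fin k, sd (g p)) * det (Y.submatrix g id) := by
      rw [hZsub g, Matrix.det_mul, Matrix.det_diagonal]
    have hprod : Complex.normSq (∏ p : Fin k, sd (g p)) = ∏ p : Fin k, e (g p) := by
      rw [map_prod Complex.normSq]
      refine Finset.prod_congr rfl fun p _ => ?_
      rw [hsddef]
      simp only [Complex.normSq_ofReal, Real.mul_self_sqrt (henn (g p))]
    have hebound : ∏ p : Fin k, e (g p) ≤ bound := by
      have h1 : ∀ p : Fin k, e (g p) = (fun j => (μ j) ^ 2) (σ (g p)) := fun p => hσ (g p)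
      rw [Finset.prod_congr rfl fun p _ => h1 p]
      set T := Finset.image (fun p => σ (g p)) Finset.univ with hTdef
      have hinj : Function.Injective (fun p => σ (g p)) :=
        σ.injective.comp hgsm.injective
      have hTcard : T.card = k := by
        rw [hTdef, Finset.card_image_of_injective _ hinj, Finset.card_univ, Fintype.card_fin]
      have h2 : ∏ p : Fin k, (fun j => (μ j) ^ 2) (σ (g p)) = ∏ j ∈ T, (μ j) ^ 2 := by
        rw [hTdef, Finset.prod_image (fun a _ b _ h => hinj h)]
      rw [h2, hbdef]
      have := my_antitone_prod_le hw hwnn T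
      rwa [hTcard] at this
    calc Complex.normSq (det (Z.submatrix g id))
        = (∏ p : Fin k, e (g p)) * Complex.normSq (det (Y.submatrix g id)) := by
          rw [hdet, map_mul Complex.normSq, hprod]
      _ ≤ bound * Complex.normSq (det (Y.submatrix g id)) := by
          exact mul_le_mul_of_nonneg_right hebound (Complex.normSq_nonneg _)
  have hYY : Yᴴ * Y = (1 : Matrix (Fin k) (Fin k) ℂ) := by
    have : (W * Wᴴ).submatrix ⇑f ⇑f = Yᴴ * Y := by
      rw [my_submatrix_mul W Wᴴ ⇑f ⇑f, hYH, ← hYdef]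
    rw [← this, hWW]
    ext p q
    simp [Matrix.submatrix_apply, Matrix.one_apply, f.injective.eq_iff]
  have hsY1 : ∑ g ∈ SM, Complex.normSq (det (Y.submatrix g id)) = 1 := by
    rw [hYY] at hsY
    have : ((∑ g ∈ SM, Complex.normSq (det (Y.submatrix g id)) : ℝ) : ℂ) = 1 := by
      push_cast
      rw [← hsY, Matrix.det_one]
    exact_mod_cast this
  have hupp : ∑ g ∈ SM, Complex.normSq (det (Z.submatrix g id)) ≤ bound := by
    calc ∑ g ∈ SM, Complex.normSq (det (Z.submatrix g id))
        ≤ ∑ g ∈ SM, bound * Complex.normSq (det (Y.submatrix g id)) :=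
          Finset.sum_le_sum hterm_bound
      _ = bound * ∑ g ∈ SM, Complex.normSq (det (Y.submatrix g id)) := by
          rw [Finset.mul_sum]
      _ = bound := by rw [hsY1, mul_one]
  calc ∏ j ∈ S, Complex.normSq (G j j)
      ≤ ∑ g ∈ SM, Complex.normSq (det (C.submatrix g id)) := hlow
    _ = ∑ g ∈ SM, Complex.normSq (det (Z.submatrix g id)) := hsum_eq
    _ ≤ bound := hupp
theorem my_sq_gram {m n : ℕ} (h : n ≤ m) (T : Matrix (Fin m) (Fin n) ℂ)
    (hT : NetMod.GenUpperTri T) :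
    Tᴴ * T = (NetMod.squarePart h T)ᴴ * (NetMod.squarePart h T) := by
  ext j l
  simp only [Matrix.mul_apply, Matrix.conjTranspose_apply, NetMod.squarePart,
    Matrix.submatrix_apply, id]
  have h0 : ∑ i : Fin n, star (T (Fin.castLE h i) j) * T (Fin.castLE h i) l
      = ∑ i ∈ (Finset.univ : Finset (Fin n)).map (Fin.castLEEmb h),
        star (T i j) * T i l := by
    rw [Finset.sum_map]
    rfl
  rw [h0]
  refine (Finset.sum_subset (Finset.subset_univ _) fun i _ hi => ?_).symm
  have hin : ¬ (i : ℕ) < n := by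
    intro hlt
    exact hi (Finset.mem_map.mpr ⟨⟨(i : ℕ), hlt⟩, Finset.mem_univ _, Fin.ext rfl⟩)
  have hz : T i j = 0 := hT i j (lt_of_lt_of_le j.isLt (le_of_not_gt hin))
  rw [hz, star_zero, zero_mul]

theorem my_sortDesc_antitone {n : ℕ} {x : Fin n → ℝ} (hx : Antitone x) :
    NetMod.sortDesc x = x := by
  have hmon : Monotone (x ∘ (Fin.revPerm : Equiv.Perm (Fin n))) := by
    intro i j hij
    refine hx ?_
    simpa [Fin.rev_le_rev] using hij
  have hcomp := Tuple.comp_sort_eq_comp_iff_monotone.mpr hmon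
  funext i
  have h2 := congrFun hcomp i.rev
  simp only [Function.comp_apply, Fin.revPerm_apply] at h2
  unfold NetMod.sortDesc
  rw [← h2, Fin.rev_rev]

theorem my_card_filter_lt {n k : ℕ} (hk : k ≤ n) :
    (Finset.univ.filter (fun j : Fin n => (j : ℕ) < k)).card = k := by
  classical
  have : Finset.univ.filter (fun j : Fin n => (j : ℕ) < k)
      = (Finset.univ : Finset (Fin k)).map (Fin.castLEEmb hk) := by
    ext j
    simp only [Finset.mem_filter, Finset.mem_univ, true_and, Finset.mem_map]
    constructor
    · intro hj
      exact ⟨⟨(j : ℕ), hj⟩, Fin.ext rfl⟩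
    · rintro ⟨i, _, rfl⟩
      simpa using i.isLt
  rw [this, Finset.card_map, Finset.card_univ, Fintype.card_fin]

theorem my_conj_gram {m n : ℕ} (U : Matrix (Fin m) (Fin m) ℂ) (hU : Uᴴ * U = 1)
    (T : Matrix (Fin m) (Fin n) ℂ) (V : Matrix (Fin n) (Fin n) ℂ) :
    (U * T * Vᴴ)ᴴ * (U * T * Vᴴ) = V * (Tᴴ * T) * Vᴴ := by
  simp only [Matrix.conjTranspose_mul, Matrix.conjTranspose_conjTranspose, Matrix.mul_assoc]
  rw [show Uᴴ * (U * (T * Vᴴ)) = T * Vᴴ by rw [← Matrix.mul_assoc, hU, Matrix.one_mul]]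

end Aux
open Matrix BigOperators Finset in
open scoped ComplexOrder in
/-- Theorem 1, converse. Any joint unitary triangularization with
positive real diagonals has a diagonal-ratios vector majorized by `μ(A1,A2)`. -/
theorem majorization_of_joint_triangularization
    {m1 m2 n : ℕ} (h1 : n ≤ m1) (h2 : n ≤ m2)
    (A1 : Matrix (Fin m1) (Fin n) ℂ) (A2 : Matrix (Fin m2) (Fin n) ℂ)
    (hA1 : A1.rank = n) (hA2 : A2.rank = n)
    (U1 : Matrix (Fin m1) (Fin m1) ℂ) (U2 : Matrix (Fin m2) (Fin m2) ℂ)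
    (V : Matrix (Fin n) (Fin n) ℂ)
    (T1 : Matrix (Fin m1) (Fin n) ℂ) (T2 : Matrix (Fin m2) (Fin n) ℂ)
    (hJT : NetMod.JointTriang A1 A2 U1 U2 V T1 T2)
    (hd1 : NetMod.PosRealDiag h1 T1) (hd2 : NetMod.PosRealDiag h2 T2)
    (μ : Fin n → ℝ) (hμ : NetMod.IsGSV A1 A2 μ) :
    NetMod.MulMaj μ
      (fun j => (T1 (Fin.castLE h1 j) j).re / (T2 (Fin.castLE h2 j) j).re) := by
  classical
  obtain ⟨hU1, hU2, hV, hT1, hT2, hA1e, hA2e⟩ := hJT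
  obtain ⟨hmono, hpos, hdet⟩ := hμ
  set R1 := NetMod.squarePart h1 T1 with hR1def
  set R2 := NetMod.squarePart h2 T2 with hR2def
  set a := fun j : Fin n => (T1 (Fin.castLE h1 j) j).re with hadef
  set b := fun j : Fin n => (T2 (Fin.castLE h2 j) j).re with hbdef
  set r := fun j : Fin n => a j / b j with hrdef
  have hapos : ∀ j, 0 < a j := fun j => (hd1 j).1
  have hbpos : ∀ j, 0 < b j := fun j => (hd2 j).1
  have hrpos : ∀ j, 0 < r j := fun j => div_pos (hapos j) (hbpos j)
  have hR1diag : ∀ j, R1 j j = ((a j : ℝ) : ℂ) := by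
    intro j
    apply Complex.ext
    · rfl
    · exact (hd1 j).2
  have hR2diag : ∀ j, R2 j j = ((b j : ℝ) : ℂ) := by
    intro j
    apply Complex.ext
    · rfl
    · exact (hd2 j).2
  have hR1tri : R1.BlockTriangular id := by
    intro i j hij
    exact hT1 _ _ hij
  have hR2tri : R2.BlockTriangular id := by
    intro i j hij
    exact hT2 _ _ hij
  have hdetR2 : det R2 = ∏ j, ((b j : ℝ) : ℂ) := by
    rw [Matrix.det_of_upperTriangular hR2tri]
    exact Finset.prod_congr rfl fun j _ => hR2diag j
  have hdetR2ne : det R2 ≠ 0 := by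
    rw [hdetR2]
    refine Finset.prod_ne_zero_iff.mpr fun j _ => ?_
    exact_mod_cast (hbpos j).ne'
  have hR2unit : IsUnit R2.det := isUnit_iff_ne_zero.mpr hdetR2ne
  have hR2inv' : R2⁻¹ * R2 = 1 := Matrix.nonsing_inv_mul R2 hR2unit
  set G := R1 * R2⁻¹ with hGdef
  have hR2invtri : R2⁻¹.BlockTriangular id := by
    haveI := R2.invertibleOfIsUnitDet hR2unit
    exact Matrix.blockTriangular_inv_of_blockTriangular hR2tri
  have hGtri : G.BlockTriangular id := hR1tri.mul hR2invtri
  have hGtri' : ∀ p q : Fin n, (q : ℕ) < (p : ℕ) → G p q = 0 := by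
    intro p q h
    exact hGtri h
  have hGdiag : ∀ j, G j j = ((r j : ℝ) : ℂ) := by
    intro j
    have hsum : R1 j j = ∑ l, G j l * R2 l j := by
      rw [← Matrix.mul_apply, hGdef, Matrix.mul_assoc, hR2inv', Matrix.mul_one]
    have hsingle : ∑ l, G j l * R2 l j = G j j * R2 j j := by
      refine Finset.sum_eq_single j (fun l _ hlj => ?_) (by simp)
      rcases lt_trichotomy (l : ℕ) (j : ℕ) with hc | hc | hc
      · rw [hGtri' j l hc, zero_mul]
      · exact absurd (Fin.ext hc) hlj
      · rw [hR2tri (show (id j : Fin n) < id l from hc), mul_zero]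
    have heq : ((a j : ℝ) : ℂ) = G j j * ((b j : ℝ) : ℂ) := by
      rw [← hR1diag, hsum, hsingle, hR2diag]
    have hbne : ((b j : ℝ) : ℂ) ≠ 0 := by exact_mod_cast (hbpos j).ne'
    rw [hrdef]
    push_cast
    rw [eq_div_iff hbne]
    exact heq.symm
  -- Gram matrices
  have hVV' : V * Vᴴ = 1 := mul_eq_one_comm.mp hV
  set B2 := R2 * Vᴴ with hB2def
  have hM1 : A1ᴴ * A1 = V * (R1ᴴ * R1) * Vᴴ := by
    rw [hA1e, my_conj_gram U1 hU1, my_sq_gram h1 T1 hT1]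
  have hM2 : A2ᴴ * A2 = V * (R2ᴴ * R2) * Vᴴ := by
    rw [hA2e, my_conj_gram U2 hU2, my_sq_gram h2 T2 hT2]
  have hM2B : A2ᴴ * A2 = B2ᴴ * B2 := by
    rw [hM2, hB2def, Matrix.conjTranspose_mul, Matrix.conjTranspose_conjTranspose]
    simp only [Matrix.mul_assoc]
  have hGB : G * B2 = R1 * Vᴴ := by
    rw [hGdef, hB2def, Matrix.mul_assoc, ← Matrix.mul_assoc R2⁻¹, hR2inv', Matrix.one_mul]
  have hM1B : A1ᴴ * A1 = (G * B2)ᴴ * (G * B2) := by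
    rw [hGB, hM1, Matrix.conjTranspose_mul, Matrix.conjTranspose_conjTranspose]
    simp only [Matrix.mul_assoc]
  have hdetV : det Vᴴ * det V = 1 := by
    rw [← Matrix.det_mul, hV, Matrix.det_one]
  have hdetB2ne : det B2 ≠ 0 := by
    rw [hB2def, Matrix.det_mul]
    exact mul_ne_zero hdetR2ne (left_ne_zero_of_mul_eq_one hdetV)
  have hdetM2ne : det (A2ᴴ * A2) ≠ 0 := by
    rw [hM2B, Matrix.det_mul]
    exact mul_ne_zero (by rwa [Matrix.det_conjTranspose, star_ne_zero]) hdetB2ne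
  -- characteristic identity for Gᴴ G
  have hchar : ∀ x : ℂ, det (Gᴴ * G - x • (1 : Matrix (Fin n) (Fin n) ℂ))
      = ∏ j, ((μ j : ℂ) ^ 2 - x) := by
    intro x
    have hkey : B2ᴴ * (Gᴴ * G - x • (1 : Matrix (Fin n) (Fin n) ℂ)) * B2
        = A1ᴴ * A1 - x • (A2ᴴ * A2) := by
      rw [Matrix.mul_sub, Matrix.sub_mul]
      congr 1
      · rw [hM1B, Matrix.conjTranspose_mul G B2]
        simp only [Matrix.mul_assoc]
      · rw [Matrix.mul_smul, Matrix.smul_mul, Matrix.mul_one, hM2B]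
    have hdet1 := congrArg det hkey
    rw [Matrix.det_mul, Matrix.det_mul, hdet x] at hdet1
    have hreorg : det B2ᴴ * det (Gᴴ * G - x • (1 : Matrix (Fin n) (Fin n) ℂ)) * det B2
        = det (A2ᴴ * A2) * det (Gᴴ * G - x • (1 : Matrix (Fin n) (Fin n) ℂ)) := by
      simp only [hM2B, Matrix.det_mul]
      ring
    rw [hreorg] at hdet1
    exact mul_left_cancel₀ hdetM2ne hdet1
  -- first part : total products agree
  have htot : ∏ j, μ j = ∏ j, r j := by
    have h0 := hchar 0
    have hdetG : det G = ((∏ j, r j : ℝ) : ℂ) := by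
      rw [Matrix.det_of_upperTriangular hGtri]
      rw [Finset.prod_congr rfl fun j _ => hGdiag j]
      push_cast
      rfl
    have hGG : det (Gᴴ * G) = ((∏ j, r j : ℝ) : ℂ) * ((∏ j, r j : ℝ) : ℂ) := by
      rw [Matrix.det_mul, Matrix.det_conjTranspose, hdetG]
      rw [Complex.star_def, Complex.conj_ofReal]
    rw [zero_smul, sub_zero, hGG] at h0
    have hreal : (∏ j, r j) * (∏ j, r j) = (∏ j, μ j) * (∏ j, μ j) := by
      have : ((∏ j, r j : ℝ) : ℂ) * ((∏ j, r j : ℝ) : ℂ)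
          = ((∏ j, μ j : ℝ) : ℂ) * ((∏ j, μ j : ℝ) : ℂ) := by
        rw [h0]
        push_cast
        rw [← Finset.prod_mul_distrib]
        exact Finset.prod_congr rfl fun j _ => by ring
      exact_mod_cast this
    have hrnn : 0 ≤ ∏ j, r j := Finset.prod_nonneg fun j _ => (hrpos j).le
    have hμnn : 0 ≤ ∏ j, μ j := Finset.prod_nonneg fun j _ => (hpos j).le
    have := (pow_left_inj₀ hrnn hμnn (two_ne_zero)).mp (by rw [sq, sq]; exact hreal)
    exact this.symm
  refine ⟨htot, ?_⟩
  -- second part : partial products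
  intro k hk1 hkn
  have hμsort : NetMod.sortDesc μ = μ := my_sortDesc_antitone hmono
  have hPμ : NetMod.PProd (NetMod.sortDesc μ) k
      = ∏ j ∈ Finset.univ.filter (fun j : Fin n => (j : ℕ) < k), μ j := by
    rw [hμsort]; rfl
  set S := Finset.image (fun i : Fin n => Tuple.sort r i.rev)
      (Finset.univ.filter (fun i : Fin n => (i : ℕ) < k)) with hSdef
  have hinj : Function.Injective (fun i : Fin n => Tuple.sort r i.rev) :=
    (Tuple.sort r).injective.comp Fin.rev_injective
  have hScard : S.card = k := by
    rw [hSdef, Finset.card_image_of_injective _ hinj, my_card_filter_lt hkn.le]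
  have hPr : NetMod.PProd (NetMod.sortDesc r) k = ∏ j ∈ S, r j := by
    rw [hSdef, Finset.prod_image (fun x _ y _ h => hinj h)]
    rfl
  have hkey := my_key G μ hmono hpos hchar hGtri' S
  rw [hScard] at hkey
  have hnorm : ∀ j, Complex.normSq (G j j) = (r j) ^ 2 := by
    intro j
    rw [hGdiag j, Complex.normSq_ofReal, sq]
  rw [Finset.prod_congr rfl fun j _ => hnorm j] at hkey
  rw [Finset.prod_pow, Finset.prod_pow] at hkey
  have hrSnn : 0 ≤ ∏ j ∈ S, r j := Finset.prod_nonneg fun j _ => (hrpos j).le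
  have hμknn : 0 ≤ ∏ j ∈ Finset.univ.filter (fun j : Fin n => (j : ℕ) < k), μ j :=
    Finset.prod_nonneg fun j _ => (hpos j).le
  have hfinal := (pow_le_pow_iff_left₀ hrSnn hμknn two_ne_zero).mp hkey
  show NetMod.PProd (NetMod.sortDesc fun j => a j / b j) k ≤ NetMod.PProd (NetMod.sortDesc μ) k
  rw [hPμ]
  calc NetMod.PProd (NetMod.sortDesc fun j => a j / b j) k
      = ∏ j ∈ S, r j := hPr
    _ ≤ _ := hfinal
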